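/- Finite mixtures of univariate logistic distributions are identifiable: if sum_{i=1}^s π_i L(x; μ_i, σ_i) = sum_{j=1}^t π'_j L(x; μ'_j, σ'_j) for all x ∈ ℝ, where the (μ_i, σ_i) are pairwise distinct, the (μ'_j, σ'_j) are pairwise distinct, all weights are in (0,1) and each set of weights sums to 1, then s = t and the collections of triples {(π_i, μ_i, σ_i)} and {(π'_j, μ'_j, σ'_j)} coincide as sets. -/

import Mathlib

open Complex Filter Finset Topology

theorem exp_eq_neg_one' {w : ℂ} (h : Complex.exp w = -1) :
    ∃ n : ℤ, w = (2 * n + 1) * Real.pi * Complex.I := by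
  have h2 : Complex.exp w = Complex.exp (Real.pi * Complex.I) := by
    rw [h, Complex.exp_pi_mul_I]
  rw [Complex.exp_eq_exp_iff_exists_int] at h2
  obtain ⟨n, hn⟩ := h2
  exact ⟨n, by rw [hn]; ring⟩

theorem one_add_exp_ne_zero {w : ℂ} (h : |w.im| < Real.pi) :
    1 + Complex.exp w ≠ 0 := by
  intro h0
  have he : Complex.exp w = -1 := by linear_combination h0
  obtain ⟨n, hn⟩ := exp_eq_neg_one' he
  have him : w.im = (2 * (n : ℝ) + 1) * Real.pi := by
    rw [hn]; simp [Complex.ext_iff]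
  have h1 : (1 : ℝ) ≤ |2 * (n : ℝ) + 1| := by
    have h2 : (2 * n + 1 : ℤ) ≠ 0 := by omega
    have h3 := Int.one_le_abs h2
    calc (1:ℝ) ≤ |(2 * n + 1 : ℤ)| := by exact_mod_cast h3
    _ = |2 * (n:ℝ) + 1| := by push_cast; ring_nf
  have hpi := Real.pi_pos
  rw [him, abs_mul, abs_of_pos hpi] at h
  nlinarith

theorem strip_den_ne_zero {m s : ℝ} (hs : 0 < s) {z : ℂ} (hz : |z.im| < Real.pi * s) :
    1 + Complex.exp (-(z - m) / s) ≠ 0 := by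
  apply one_add_exp_ne_zero
  have him : ((-(z - (m:ℂ))) / (s:ℂ)).im = -z.im / s := by
    rw [Complex.div_ofReal_im]; simp
  rw [him, abs_div, abs_neg, abs_of_pos hs, div_lt_iff₀ hs]
  linarith

theorem logistic_lin_indep (A : Finset (ℝ × ℝ)) (c : ℝ × ℝ → ℝ)
    (hA : ∀ p ∈ A, 0 < p.2)
    (h : ∀ x : ℝ, ∑ p ∈ A, c p * (1 + Real.exp (-(x - p.1) / p.2))⁻¹ = 0) :
    ∀ p ∈ A, c p = 0 := by
  classical
  revert hA h
  induction A using Finset.strongInduction with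
  | _ A ih =>
    intro hA h
    rcases A.eq_empty_or_nonempty with rfl | ⟨p0, hp0⟩
    · intro p hp; simp at hp
    obtain ⟨q, hqA, hq⟩ := A.exists_min_image Prod.snd ⟨p0, hp0⟩
    have hσ0 : 0 < q.2 := hA q hqA
    have hpi := Real.pi_pos
    set S : Set ℂ := Complex.im ⁻¹' Set.Ioo (-(Real.pi * q.2)) (Real.pi * q.2) with hS
    have hmemS : ∀ z : ℂ, z ∈ S ↔ |z.im| < Real.pi * q.2 := by
      intro z; rw [hS]; simp [Set.mem_preimage, abs_lt, and_comm]
    have hopen : IsOpen S := isOpen_Ioo.preimage Complex.continuous_im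
    have hconv : Convex ℝ S := (convex_Ioo _ _).linear_preimage Complex.imLm
    set F : ℂ → ℂ := fun z => ∑ p ∈ A, (c p : ℂ) * (1 + Complex.exp (-(z - p.1) / p.2))⁻¹
      with hF
    have hden : ∀ p ∈ A, ∀ z ∈ S, 1 + Complex.exp (-(z - (p.1:ℂ)) / p.2) ≠ 0 := by
      intro p hp z hz
      apply strip_den_ne_zero (hA p hp)
      calc |z.im| < Real.pi * q.2 := (hmemS z).1 hz
      _ ≤ Real.pi * p.2 := by nlinarith [hq p hp]
    have hdiffF : DifferentiableOn ℂ F S := by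
      apply DifferentiableOn.fun_sum
      intro p hp
      apply DifferentiableOn.const_mul
      apply DifferentiableOn.inv
      · apply Differentiable.differentiableOn
        fun_prop
      · exact fun z hz => hden p hp z hz
    have hreal : ∀ x : ℝ, F (x : ℂ) = 0 := by
      intro x
      have : ((∑ p ∈ A, c p * (1 + Real.exp (-(x - p.1) / p.2))⁻¹ : ℝ) : ℂ) = F x := by
        rw [hF]
        push_cast
        rfl
      rw [← this, h x, Complex.ofReal_zero]
    have hF0 : Set.EqOn F 0 S := by
      have hAn : AnalyticOnNhd ℂ F S := hdiffF.analyticOnNhd hopen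
      apply hAn.eqOn_zero_of_preconnected_of_frequently_eq_zero hconv.isPreconnected
        (z₀ := 0) (by rw [hmemS]; simp; positivity)
      have ht : Tendsto (fun n : ℕ => (((n:ℝ)+1)⁻¹ : ℂ)) atTop (𝓝[≠] (0:ℂ)) := by
        apply tendsto_nhdsWithin_of_tendsto_nhds_of_eventually_within
        · have h1 : Tendsto (fun n : ℕ => ((n:ℝ)+1)⁻¹) atTop (𝓝 0) := by
            exact tendsto_one_div_add_atTop_nhds_zero_nat.congr (by intro n; simp [one_div])
          have h2 := (Complex.continuous_ofReal.tendsto 0).comp h1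
          rw [Complex.ofReal_zero] at h2
          apply h2.congr
          intro n
          simp only [Function.comp_apply]
          push_cast
          ring
        · filter_upwards with n
          simp only [Set.mem_compl_iff, Set.mem_singleton_iff]
          have h1 : ((n:ℂ)+1) ≠ 0 := by exact_mod_cast Nat.succ_ne_zero n
          exact inv_ne_zero h1
      apply ht.frequently
      apply Frequently.of_forall
      intro n
      have hx := hreal (((n:ℝ)+1)⁻¹)
      have hcast : ((((n:ℝ)+1)⁻¹ : ℝ) : ℂ) = (((n:ℕ):ℂ)+1)⁻¹ := by push_cast; ring
      rw [hcast] at hx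
      exact hx
    -- key step: c q = 0
    have hzstar_ne : ∀ p ∈ A.erase q,
        1 + Complex.exp (-(((q.1:ℂ) - Complex.I * (Real.pi * q.2)) - (p.1:ℂ)) / p.2) ≠ 0 := by
      intro p hp h0
      have hpA : p ∈ A := Finset.mem_of_mem_erase hp
      have hpq : p ≠ q := Finset.ne_of_mem_erase hp
      have hps : 0 < p.2 := hA p hpA
      have he : Complex.exp (-(((q.1:ℂ) - Complex.I * (Real.pi * q.2)) - (p.1:ℂ)) / p.2) = -1 := by
        linear_combination h0
      obtain ⟨n, hn⟩ := exp_eq_neg_one' he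
      have hp2 : (p.2:ℂ) ≠ 0 := by exact_mod_cast hps.ne'
      rw [div_eq_iff hp2] at hn
      have hre : p.1 - q.1 = (0:ℝ) := by
        have h5 := congrArg Complex.re hn
        simpa using h5
      have him : Real.pi * q.2 = (2*(n:ℝ)+1) * Real.pi * p.2 := by
        have h5 := congrArg Complex.im hn
        simpa using h5
      have hle : q.2 ≤ p.2 := hq p hpA
      have hn0 : (0:ℤ) < 2 * n + 1 ∧ (2 * n + 1 : ℤ) ≤ 1 := by
        constructor
        · by_contra hc
          push_neg at hc
          have h6 : (2 * (n:ℝ) + 1) ≤ 0 := by exact_mod_cast hc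
          nlinarith [mul_nonneg (mul_nonneg (by linarith : (0:ℝ) ≤ -(2*(n:ℝ)+1)) hpi.le) hps.le,
            mul_pos hpi hσ0]
        · by_contra hc
          push_neg at hc
          have h6 : (2:ℝ) ≤ 2 * (n:ℝ) + 1 := by exact_mod_cast hc
          nlinarith [mul_nonneg (mul_nonneg (by linarith : (0:ℝ) ≤ 2*(n:ℝ)+1-2) hpi.le) hps.le,
            mul_pos hpi hσ0, mul_pos hpi hps, mul_le_mul_of_nonneg_left hle hpi.le]
      have hnn : n = 0 := by omega
      rw [hnn] at him
      norm_num at him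
      have hs2 : p.2 = q.2 := by
        linarith
      exact hpq (Prod.ext (by linarith) hs2)
    have hcq : c q = 0 := by
      set g : ℂ → ℂ := fun z => ∑ p ∈ A.erase q, (c p : ℂ) * (1 + Complex.exp (-(z - p.1) / p.2))⁻¹
        with hg
      set zst : ℂ := (q.1:ℂ) - Complex.I * (Real.pi * q.2) with hzst
      have hgcont : ContinuousAt g zst := by
        rw [hg]
        apply tendsto_finset_sum
        intro p hp
        exact ContinuousAt.mul continuousAt_const
          (ContinuousAt.inv₀ (by fun_prop) (hzstar_ne p hp))
      set zz : ℝ → ℂ := fun δ => (q.1 : ℂ) - Complex.I * (Real.pi * q.2 - δ) with hzz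
      set dd : ℝ → ℂ := fun δ => 1 + Complex.exp (Complex.I * (Real.pi - δ / q.2)) with hdd
      have heq1 : ∀ δ ∈ Set.Ioo (0:ℝ) (Real.pi * q.2), (c q : ℂ) = -g (zz δ) * dd δ := by
        intro δ hδ
        obtain ⟨hδ0, hδ1⟩ := hδ
        have hzzS : zz δ ∈ S := by
          rw [hmemS]
          have : (zz δ).im = -(Real.pi * q.2 - δ) := by
            rw [hzz]; simp
          rw [this, abs_neg, abs_of_pos (by linarith)]
          linarith
        have harg : -((zz δ) - (q.1:ℂ)) / (q.2:ℂ) = Complex.I * ((Real.pi:ℂ) - (δ:ℂ) / q.2) := by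
          rw [hzz]
          have hq2 : (q.2 : ℂ) ≠ 0 := by exact_mod_cast hσ0.ne'
          field_simp
          try ring
        have hddne : dd δ ≠ 0 := by
          rw [hdd]
          apply one_add_exp_ne_zero
          have : (Complex.I * ((Real.pi:ℂ) - (δ:ℂ) / q.2)).im = Real.pi - δ / q.2 := by
            simp [Complex.ext_iff]
          rw [this, abs_of_pos]
          · have : δ / q.2 > 0 := by positivity
            linarith
          · have : δ / q.2 < Real.pi := by
              rw [div_lt_iff₀ hσ0]; linarith
            linarith
        have hFz := hF0 hzzS
        rw [hF] at hFz
        simp only [Pi.zero_apply] at hFz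
        rw [← Finset.add_sum_erase A _ hqA] at hFz
        rw [harg] at hFz
        have hcancel : (dd δ)⁻¹ * dd δ = 1 := inv_mul_cancel₀ hddne
        simp only [hg]
        linear_combination (dd δ) * hFz - (c q : ℂ) * hcancel
      have hzz0 : Tendsto zz (𝓝 (0:ℝ)) (𝓝 zst) := by
        have hc : Continuous zz := by rw [hzz]; fun_prop
        have h0 : zz 0 = zst := by rw [hzz, hzst]; push_cast; ring
        rw [← h0]; exact hc.tendsto 0
      have hdd0 : Tendsto dd (𝓝 (0:ℝ)) (𝓝 0) := by
        have hc : Continuous dd := by rw [hdd]; fun_prop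
        have h0 : dd 0 = 0 := by
          rw [hdd]
          simp only [Complex.ofReal_zero, zero_div, sub_zero, mul_comm Complex.I]
          rw [Complex.exp_pi_mul_I]
          ring
        rw [← h0]; exact hc.tendsto 0
      have hlim : Tendsto (fun δ : ℝ => -g (zz δ) * dd δ) (𝓝[>] (0:ℝ)) (𝓝 0) := by
        have h3 := ((hgcont.tendsto.comp hzz0).neg.mul hdd0)
        rw [mul_zero] at h3
        exact h3.mono_left nhdsWithin_le_nhds
      have heq2 : (fun _ : ℝ => (c q : ℂ)) =ᶠ[𝓝[>] (0:ℝ)] fun δ => -g (zz δ) * dd δ := by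
        filter_upwards [Ioo_mem_nhdsGT_of_mem
            (Set.mem_Ico.mpr ⟨le_refl (0:ℝ), by positivity⟩ : (0:ℝ) ∈ Set.Ico (0:ℝ) (Real.pi * q.2))]
          with δ hδ
        exact heq1 δ hδ
      have hlim2 : Tendsto (fun _ : ℝ => (c q : ℂ)) (𝓝[>] (0:ℝ)) (𝓝 0) := hlim.congr' heq2.symm
      have hfin := tendsto_nhds_unique hlim2 tendsto_const_nhds
      exact_mod_cast hfin.symm
    -- conclude
    intro p hp
    by_cases hpq : p = q
    · rw [hpq]; exact hcq
    · apply ih (A.erase q) (Finset.erase_ssubset hqA)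
        (fun r hr => hA r (Finset.mem_of_mem_erase hr))
        (fun x => by
          have := h x
          rw [← Finset.add_sum_erase A _ hqA, hcq] at this
          linarith)
        p (Finset.mem_erase.mpr ⟨hpq, hp⟩)

theorem univariate_logistic_mixture_identifiable
    (s t : ℕ)
    (π μ σ : Fin s → ℝ) (π' μ' σ' : Fin t → ℝ)
    (hσ : ∀ i, 0 < σ i) (hσ' : ∀ j, 0 < σ' j)
    (hπ : ∀ i, π i ∈ Set.Ioo (0 : ℝ) 1) (hπ' : ∀ j, π' j ∈ Set.Ioo (0 : ℝ) 1)
    (hsum : ∑ i, π i = 1) (hsum' : ∑ j, π' j = 1)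
    (hdist : Function.Injective (fun i => (μ i, σ i)))
    (hdist' : Function.Injective (fun j => (μ' j, σ' j)))
    (h : ∀ x : ℝ,
      ∑ i, π i * (1 + Real.exp (-(x - μ i) / σ i))⁻¹ =
      ∑ j, π' j * (1 + Real.exp (-(x - μ' j) / σ' j))⁻¹) :
    ∃ e : Fin s ≃ Fin t, ∀ i,
      π' (e i) = π i ∧ μ' (e i) = μ i ∧ σ' (e i) = σ i := by
  classical
  set P : Fin s → ℝ × ℝ := fun i => (μ i, σ i) with hP
  set Q : Fin t → ℝ × ℝ := fun j => (μ' j, σ' j) with hQ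
  set A : Finset (ℝ × ℝ) := (Finset.univ.image P) ∪ (Finset.univ.image Q) with hA
  set c : ℝ × ℝ → ℝ := fun p =>
    (∑ i ∈ Finset.univ.filter (fun i => P i = p), π i)
    - (∑ j ∈ Finset.univ.filter (fun j => Q j = p), π' j) with hc
  have hPA : ∀ i, P i ∈ A :=
    fun i => Finset.mem_union_left _ (Finset.mem_image_of_mem P (Finset.mem_univ i))
  have hQA : ∀ j, Q j ∈ A :=
    fun j => Finset.mem_union_right _ (Finset.mem_image_of_mem Q (Finset.mem_univ j))
  have hApos : ∀ p ∈ A, 0 < p.2 := by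
    intro p hp
    rw [hA, Finset.mem_union] at hp
    rcases hp with hp | hp <;> rw [Finset.mem_image] at hp
    · obtain ⟨i, -, rfl⟩ := hp; exact hσ i
    · obtain ⟨j, -, rfl⟩ := hp; exact hσ' j
  have hzero : ∀ x : ℝ, ∑ p ∈ A, c p * (1 + Real.exp (-(x - p.1) / p.2))⁻¹ = 0 := by
    intro x
    have h1 : ∀ (n : ℕ) (R : Fin n → ℝ × ℝ) (w : Fin n → ℝ), (∀ i, R i ∈ A) →
        ∑ p ∈ A, (∑ i ∈ Finset.univ.filter (fun i => R i = p), w i)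
            * (1 + Real.exp (-(x - p.1) / p.2))⁻¹
          = ∑ i, w i * (1 + Real.exp (-(x - (R i).1) / (R i).2))⁻¹ := by
      intro n R w hR
      rw [← Finset.sum_fiberwise_of_maps_to (fun i _ => hR i)
        (fun i => w i * (1 + Real.exp (-(x - (R i).1) / (R i).2))⁻¹)]
      apply Finset.sum_congr rfl
      intro p hp
      rw [Finset.sum_mul]
      apply Finset.sum_congr rfl
      intro i hi
      rw [Finset.mem_filter] at hi
      rw [hi.2]
    simp only [hc, sub_mul, Finset.sum_sub_distrib]
    rw [h1 s P π hPA, h1 t Q π' hQA]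
    exact sub_eq_zero_of_eq (h x)
  have key : ∀ p ∈ A, c p = 0 := logistic_lin_indep A c hApos hzero
  have hfib : ∀ (n : ℕ) (R : Fin n → ℝ × ℝ), Function.Injective R → ∀ i,
      Finset.univ.filter (fun i' => R i' = R i) = {i} := by
    intro n R hinj i
    ext i'
    simp only [Finset.mem_filter, Finset.mem_univ, true_and, Finset.mem_singleton]
    constructor
    · exact fun h' => hinj h'
    · rintro rfl; rfl
  have hmatch : ∀ i : Fin s, ∃ j : Fin t, Q j = P i ∧ π' j = π i := by
    intro i
    have hc0 := key (P i) (hPA i)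
    simp only [hc] at hc0
    rw [hfib s P hdist i, Finset.sum_singleton] at hc0
    rcases (Finset.univ.filter fun j => Q j = P i).eq_empty_or_nonempty with he | ⟨j, hj⟩
    · rw [he, Finset.sum_empty] at hc0
      exact absurd (by linarith : π i = 0) (ne_of_gt (hπ i).1)
    · rw [Finset.mem_filter] at hj
      have hflt : (Finset.univ.filter fun j' => Q j' = P i) = {j} := by
        rw [← hj.2]
        exact hfib t Q hdist' j
      rw [hflt, Finset.sum_singleton] at hc0
      exact ⟨j, hj.2, by linarith⟩
  have hmatch' : ∀ j : Fin t, ∃ i : Fin s, P i = Q j := by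
    intro j
    have hc0 := key (Q j) (hQA j)
    simp only [hc] at hc0
    rw [hfib t Q hdist' j, Finset.sum_singleton] at hc0
    rcases (Finset.univ.filter fun i => P i = Q j).eq_empty_or_nonempty with he | ⟨i, hi⟩
    · rw [he, Finset.sum_empty] at hc0
      exact absurd (by linarith : π' j = 0) (ne_of_gt (hπ' j).1)
    · rw [Finset.mem_filter] at hi
      exact ⟨i, hi.2⟩
  choose e he1 he2 using hmatch
  choose e' he' using hmatch'
  have hinj : Function.Injective e := by
    intro a b hab
    apply hdist
    show P a = P b
    rw [← he1 a, ← he1 b, hab]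
  have hsurj : Function.Surjective e := by
    intro j
    refine ⟨e' j, hdist' ?_⟩
    show Q (e (e' j)) = Q j
    rw [he1 (e' j), he' j]
  refine ⟨Equiv.ofBijective e ⟨hinj, hsurj⟩, fun i => ?_⟩
  have hq1 := he1 i
  rw [hQ, hP, Prod.ext_iff] at hq1
  exact ⟨he2 i, hq1.1, hq1.2⟩
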